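/- Let (q_k)_{1≤k≤n} be exchangeable random variables taking values in ℤ₊, let χ = (1/n)∑_{l=1}^n δ_{q_l} be the empirical measure, and let φ₁,…,φ_r : ℤ₊ → ℝ be bounded by B. Then |E[∏_{k=1}^r φ_k(q_k)] − E[∏_{k=1}^r ⟨φ_k, χ⟩]| ≤ 2·B^r·(1 − (n)_r/n^r), where ⟨φ, χ⟩ = (1/n)∑_l φ(q_l) and (n)_r is the falling factorial. -/

import Mathlib

open MeasureTheory Finset

/-- Key estimate for propagation of chaos (single-class version): for
exchangeable ℤ₊-valued random variables `q₁,…,qₙ` with empirical measure `χ`,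
and bounded test functions `φ₁,…,φᵣ`,
`|E[∏ₖ φₖ(qₖ)] − E[∏ₖ ⟨φₖ, χ⟩]| ≤ 2 Bʳ (1 − (n)ᵣ/nʳ)`. -/
theorem exchangeable_empirical_estimate
    {Ω : Type*} [MeasurableSpace Ω] (μ : Measure Ω) [IsProbabilityMeasure μ]
    (n r : ℕ) (hr : 1 ≤ r) (hrn : r ≤ n)
    (q : Fin n → Ω → ℕ) (hq : ∀ k, Measurable (q k))
    (hexch : ∀ σ : Equiv.Perm (Fin n),
      Measure.map (fun ω => fun k => q (σ k) ω) μ =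
        Measure.map (fun ω => fun k => q k ω) μ)
    (φ : Fin r → ℕ → ℝ) (B : ℝ) (hB : ∀ k m, |φ k m| ≤ B) :
    |(∫ ω, ∏ k : Fin r, φ k (q (Fin.castLE hrn k) ω) ∂μ) -
        ∫ ω, ∏ k : Fin r, ((1 : ℝ) / n) * ∑ l : Fin n, φ k (q l ω) ∂μ| ≤
      2 * B ^ r * (1 - (n.descFactorial r : ℝ) / (n : ℝ) ^ r) := by
  classical
  have hn : 0 < n := lt_of_lt_of_le hr hrn
  have hB0 : 0 ≤ B := le_trans (abs_nonneg _) (hB ⟨0, hr⟩ 0)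
  set T : (Fin r → Fin n) → ℝ := fun f => ∫ ω, ∏ k : Fin r, φ k (q (f k) ω) ∂μ with hT
  -- pointwise bound
  have hbound : ∀ (f : Fin r → Fin n) ω, |∏ k : Fin r, φ k (q (f k) ω)| ≤ B ^ r := by
    intro f ω
    rw [Finset.abs_prod]
    calc ∏ k : Fin r, |φ k (q (f k) ω)| ≤ ∏ _k : Fin r, B :=
          Finset.prod_le_prod (fun _ _ => abs_nonneg _) (fun k _ => hB _ _)
      _ = B ^ r := by simp
  have hmeas : ∀ f : Fin r → Fin n, Measurable fun ω => ∏ k : Fin r, φ k (q (f k) ω) :=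
    fun f => Finset.measurable_prod _ fun k _ => measurable_from_nat.comp (hq (f k))
  have hint : ∀ f : Fin r → Fin n, Integrable (fun ω => ∏ k : Fin r, φ k (q (f k) ω)) μ :=
    fun f => (integrable_const (B ^ r)).mono' ((hmeas f).aestronglyMeasurable)
      (Filter.Eventually.of_forall fun ω => by
        rw [Real.norm_eq_abs]; exact hbound f ω)
  have hTbound : ∀ f : Fin r → Fin n, |T f| ≤ B ^ r := by
    intro f
    have := norm_integral_le_of_norm_le_const (μ := μ)
      (f := fun ω => ∏ k : Fin r, φ k (q (f k) ω)) (C := B ^ r)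
      (Filter.Eventually.of_forall fun ω => by
        rw [Real.norm_eq_abs]; exact hbound f ω)
    simpa [Real.norm_eq_abs] using this
  -- exchangeability: injective f gives same expectation
  have hTinj : ∀ f : Fin r → Fin n, Function.Injective f → T f = T (Fin.castLE hrn) := by
    intro f hf
    have hg : Function.Injective (Fin.castLE hrn) := Fin.castLE_injective hrn
    obtain ⟨σ, hσ⟩ : ∃ σ : Equiv.Perm (Fin n), ∀ k, σ (Fin.castLE hrn k) = f k := by
      let e : {x // x ∈ Set.range (Fin.castLE hrn)} ≃ {x // x ∈ Set.range f} :=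
        (Equiv.ofInjective _ hg).symm.trans (Equiv.ofInjective f hf)
      refine ⟨e.extendSubtype, fun k => ?_⟩
      rw [Equiv.extendSubtype_apply_of_mem e _ ⟨k, rfl⟩]
      have h1 : (⟨Fin.castLE hrn k, ⟨k, rfl⟩⟩ : {x // x ∈ Set.range (Fin.castLE hrn)})
          = Equiv.ofInjective _ hg k := rfl
      rw [h1]
      show ((Equiv.ofInjective f hf) (((Equiv.ofInjective _ hg).symm)
        ((Equiv.ofInjective _ hg) k)) : Fin n) = f k
      rw [Equiv.symm_apply_apply]
      rfl
    set Φ : (Fin n → ℕ) → ℝ := fun v => ∏ k : Fin r, φ k (v (Fin.castLE hrn k)) with hΦ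
    have hΦmeas : Measurable Φ :=
      Finset.measurable_prod _ fun k _ => measurable_from_nat.comp (measurable_pi_apply _)
    have hQσ : Measurable (fun ω => fun j => q (σ j) ω) := measurable_pi_lambda _ fun j => hq _
    have hQ : Measurable (fun ω => fun j => q j ω) := measurable_pi_lambda _ fun j => hq _
    calc T f = ∫ ω, Φ (fun j => q (σ j) ω) ∂μ := by
          simp only [hT, hΦ]
          refine integral_congr_ae (Filter.Eventually.of_forall fun ω => ?_)
          exact (Finset.prod_congr rfl fun k _ => by rw [hσ k]).symm
      _ = ∫ v, Φ v ∂(Measure.map (fun ω => fun j => q (σ j) ω) μ) :=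
          (integral_map hQσ.aemeasurable hΦmeas.aestronglyMeasurable).symm
      _ = ∫ v, Φ v ∂(Measure.map (fun ω => fun j => q j ω) μ) := by rw [hexch σ]
      _ = T (Fin.castLE hrn) := integral_map hQ.aemeasurable hΦmeas.aestronglyMeasurable
  -- expansion of the empirical product
  have hexpand : (∫ ω, ∏ k : Fin r, ((1:ℝ)/n) * ∑ l : Fin n, φ k (q l ω) ∂μ)
      = ((1:ℝ)/n)^r * ∑ f : Fin r → Fin n, T f := by
    have hpt : ∀ ω, (∏ k : Fin r, ((1:ℝ)/n) * ∑ l : Fin n, φ k (q l ω))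
        = ((1:ℝ)/n)^r * ∑ f : Fin r → Fin n, ∏ k : Fin r, φ k (q (f k) ω) := by
      intro ω
      rw [Finset.prod_mul_distrib, Finset.prod_const, Finset.card_univ, Fintype.card_fin]
      congr 1
      rw [Finset.prod_univ_sum]
      simp
    simp_rw [hpt]
    rw [integral_const_mul, integral_finset_sum univ fun f _ => hint f]
  -- counting injective maps
  have hcard : (univ.filter fun f : Fin r → Fin n => Function.Injective f).card
      = n.descFactorial r := by
    rw [← Fintype.card_subtype,
      Fintype.card_congr (Equiv.subtypeInjectiveEquivEmbedding (Fin r) (Fin n))]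
    simp [Fintype.card_embedding_eq]
  have hcard' : (univ.filter fun f : Fin r → Fin n => ¬ Function.Injective f).card
      = n ^ r - n.descFactorial r := by
    have := Finset.card_filter_add_card_filter_not
      (s := (univ : Finset (Fin r → Fin n))) (p := fun f => Function.Injective f)
    simp only [Finset.card_univ, Fintype.card_fun, Fintype.card_fin] at this
    omega
  -- split the sum
  have hsplit : (∑ f : Fin r → Fin n, T f)
      = (n.descFactorial r : ℝ) * T (Fin.castLE hrn)
        + ∑ f ∈ univ.filter (fun f => ¬ Function.Injective f), T f := by
    rw [← Finset.sum_filter_add_sum_filter_not univ (fun f => Function.Injective f)]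
    congr 1
    rw [Finset.sum_congr rfl (fun f hf => hTinj f (by simpa using hf)),
      Finset.sum_const, hcard, nsmul_eq_mul]
  -- bound on the non-injective remainder
  set R := ∑ f ∈ univ.filter (fun f : Fin r → Fin n => ¬ Function.Injective f), T f with hR
  have hRbound : |R| ≤ ((n:ℝ)^r - (n.descFactorial r : ℝ)) * B ^ r := by
    calc |R| ≤ ∑ f ∈ univ.filter (fun f : Fin r → Fin n => ¬ Function.Injective f), |T f| :=
          Finset.abs_sum_le_sum_abs _ _
      _ ≤ (univ.filter (fun f : Fin r → Fin n => ¬ Function.Injective f)).card • (B ^ r) :=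
          Finset.sum_le_card_nsmul _ _ _ (fun f _ => hTbound f)
      _ = ((n:ℝ)^r - (n.descFactorial r : ℝ)) * B ^ r := by
          rw [hcard', nsmul_eq_mul]
          congr 1
          have := Nat.descFactorial_le_pow n r
          push_cast [Nat.cast_sub this]
          ring
  -- final algebra
  set D := (n.descFactorial r : ℝ) with hD
  set N := (n : ℝ) ^ r with hN
  have hNpos : 0 < N := by positivity
  have hDN : D ≤ N := by
    rw [hD, hN]
    exact_mod_cast Nat.descFactorial_le_pow n r
  have hratio : 0 ≤ 1 - D / N := by
    rw [sub_nonneg, div_le_one hNpos]; exact hDN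
  have hfold : (∫ ω, ∏ k : Fin r, φ k (q (Fin.castLE hrn k) ω) ∂μ) = T (Fin.castLE hrn) := rfl
  rw [hexpand, hsplit, hfold]
  have heq : T (Fin.castLE hrn) - ((1:ℝ)/n)^r * (D * T (Fin.castLE hrn) + R)
      = (1 - D / N) * T (Fin.castLE hrn) - (1 / N) * R := by
    rw [hN]
    field_simp
    have hx : (n:ℝ)^r * (n:ℝ)⁻¹^r = 1 := by
      rw [← mul_pow, mul_inv_cancel₀ (Nat.cast_ne_zero.mpr hn.ne'), one_pow]
    linear_combination (-(T (Fin.castLE hrn) * D + R)) * hx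
  rw [heq]
  have hI := hTbound (Fin.castLE hrn)
  calc |(1 - D / N) * T (Fin.castLE hrn) - (1 / N) * R|
      ≤ |(1 - D / N) * T (Fin.castLE hrn)| + |(1 / N) * R| := abs_sub _ _
    _ = (1 - D / N) * |T (Fin.castLE hrn)| + (1 / N) * |R| := by
        rw [abs_mul, abs_mul, abs_of_nonneg hratio, abs_of_nonneg (by positivity : (0:ℝ) ≤ 1 / N)]
    _ ≤ (1 - D / N) * B ^ r + (1 / N) * ((N - D) * B ^ r) := by
        gcongr
    _ = 2 * B ^ r * (1 - D / N) := by field_simp; ring
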